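/- Let κ > 0, λ > 0, and let c, a be real numbers. Then A(a) and B(a) do not both vanish; that is, it is not the case that A(a) = 0 and B(a) = 0. -/
import Mathlib


/-- The coefficient `A(a)` of `β₀` in `∂_{β₁} f`. -/
noncomputable def A (c κ lam a : ℝ) : ℝ :=
  -2 * Real.sqrt κ * Real.cos (c * Real.sqrt (κ * lam)) * Real.sinh (Real.sqrt lam * (1 - c))
  + (κ - 1) * Real.sin (c * Real.sqrt (κ * lam)) * Real.cosh (Real.sqrt lam * (1 - c))
  - (κ + 1) * Real.sin (c * Real.sqrt (κ * lam)) * Real.cosh (Real.sqrt lam * (2 * a + c - 1))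

/-- The constant term `B(a)` in `∂_{β₁} f`. -/
noncomputable def B (c κ lam a : ℝ) : ℝ :=
  -2 * Real.sqrt (lam * κ) * Real.cos (c * Real.sqrt (κ * lam)) * Real.cosh (Real.sqrt lam * (1 - c))
  + (κ - 1) * Real.sqrt lam * Real.sin (c * Real.sqrt (κ * lam)) * Real.sinh (Real.sqrt lam * (1 - c))
  - (κ + 1) * Real.sqrt lam * Real.sin (c * Real.sqrt (κ * lam)) * Real.sinh (Real.sqrt lam * (2 * a + c - 1))

theorem stmt6 (κ lam c a : ℝ) (hκ : 0 < κ) (hlam : 0 < lam) :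
    ¬ (A c κ lam a = 0 ∧ B c κ lam a = 0) := by
  rintro ⟨hA, hB⟩
  simp only [A, B] at hA hB
  set L := Real.sqrt lam with hLdef
  set K := Real.sqrt κ with hKdef
  set u := L * (1 - c) with hu
  set v := L * (2 * a + c - 1) with hv
  set S := Real.sin (c * Real.sqrt (κ * lam)) with hS
  set C := Real.cos (c * Real.sqrt (κ * lam)) with hC
  have hLpos : 0 < L := Real.sqrt_pos.mpr hlam
  have hKpos : 0 < K := Real.sqrt_pos.mpr hκ
  have h_lk : Real.sqrt (lam * κ) = L * K := Real.sqrt_mul hlam.le κ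
  rw [h_lk] at hB
  have h_pyth : Real.cosh u ^ 2 - Real.sinh u ^ 2 = 1 := Real.cosh_sq_sub_sinh_sq u
  have hsubc : Real.cosh (v - u) = Real.cosh v * Real.cosh u - Real.sinh v * Real.sinh u :=
    Real.cosh_sub v u
  have hsubs : Real.sinh (v - u) = Real.sinh v * Real.cosh u - Real.cosh v * Real.sinh u :=
    Real.sinh_sub v u
  have hX : L * S * ((κ - 1) - (κ + 1) * Real.cosh (v - u)) = 0 := by
    rw [hsubc]
    linear_combination (Real.cosh u * L) * hA - Real.sinh u * hB - ((κ - 1) * L * S) * h_pyth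
  have hY : L * (-2 * K * C - (κ + 1) * S * Real.sinh (v - u)) = 0 := by
    rw [hsubs]
    linear_combination Real.cosh u * hB - (L * Real.sinh u) * hA + (2 * K * C * L) * h_pyth
  have hcosh : 1 ≤ Real.cosh (v - u) := Real.one_le_cosh _
  have hneg : (κ - 1) - (κ + 1) * Real.cosh (v - u) < 0 := by nlinarith
  have hS0 : S = 0 := by
    rcases mul_eq_zero.mp hX with h | h
    · rcases mul_eq_zero.mp h with h' | h'
      · exact absurd h' hLpos.ne'
      · exact h'
    · exact absurd h hneg.ne
  rw [hS0] at hY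
  have hC0 : C = 0 := by
    have : L * (-2 * K * C) = 0 := by linarith [hY]
    have h2 : -2 * K * C = 0 := by
      rcases mul_eq_zero.mp this with h | h
      · exact absurd h hLpos.ne'
      · exact h
    nlinarith
  have := Real.sin_sq_add_cos_sq (c * Real.sqrt (κ * lam))
  rw [← hS, ← hC, hS0, hC0] at this
  norm_num at this
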